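/- Main theorem (iii): Let T : C → C be nonexpansive and S : C → C nonspreading with F = Fix(T) ∩ Fix(S) ≠ ∅, δ ∈ (0,1), A_T = (1−δ)I+δT, A_S = (1−δ)I+δS. Let (αₙ) ⊆ (0,1) with αₙ → 0 and Σαₙ = ∞, and (βₙ) ⊆ [0,1] with liminf βₙ(1−βₙ) > 0. Then the sequence x₁ ∈ C, x_{n+1} = αₙu + (1−αₙ)[βₙA_Txₙ + (1−βₙ)A_Sxₙ] converges strongly to P_F u. -/

import Mathlib

open Filter RealInnerProductSpace
set_option linter.unusedSectionVars false
set_option maxHeartbeats 1000000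

section helpers
variable {H : Type*} [NormedAddCommGroup H] [InnerProductSpace ℝ H] [CompleteSpace H]

lemma comb_sq (t : ℝ) (a b : H) :
    ‖t • a + (1 - t) • b‖ ^ 2
      = t * ‖a‖ ^ 2 + (1 - t) * ‖b‖ ^ 2 - t * (1 - t) * ‖a - b‖ ^ 2 := by
  simp only [norm_add_sq_real, norm_sub_sq_real, real_inner_smul_left, real_inner_smul_right,
    norm_smul, mul_pow, Real.norm_eq_abs, sq_abs, real_inner_self_eq_norm_sq]
  ring

lemma add_sq_le' (c d : H) : ‖c + d‖ ^ 2 ≤ ‖d‖ ^ 2 + 2 * ⟪c, c + d⟫ := by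
  have h : ‖c + d‖ ^ 2 = ‖d‖ ^ 2 + 2 * ⟪c, c + d⟫ - ‖c‖ ^ 2 := by
    rw [norm_add_sq_real, inner_add_right, real_inner_self_eq_norm_sq]; ring
  nlinarith [sq_nonneg ‖c‖]

lemma proj_exists (K : Set H) (hne : K.Nonempty) (hc : IsClosed K) (hv : Convex ℝ K) (u : H) :
    ∃ p ∈ K, (∀ z ∈ K, ⟪u - p, z - p⟫ ≤ 0) ∧ ∀ z ∈ K, ‖u - p‖ ≤ ‖u - z‖ := by
  obtain ⟨p, hpK, hmin⟩ := exists_norm_eq_iInf_of_complete_convex hne (hc.isComplete) hv u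
  refine ⟨p, hpK, (norm_eq_iInf_iff_real_inner_le_zero hv hpK).1 hmin, fun z hz => ?_⟩
  rw [hmin]
  exact ciInf_le ⟨0, Set.forall_mem_range.2 fun _ => norm_nonneg _⟩ (⟨z, hz⟩ : K)

lemma ultra_lim_exists (U : Ultrafilter ℕ) (g : ℕ → ℝ) (K : ℝ) (hb : ∀ n, |g n| ≤ K) :
    ∃ L, Tendsto g (U : Filter ℕ) (nhds L) := by
  have h1 : (U : Filter ℕ).map g ≤ Filter.principal (Set.Icc (-K) K) := by
    rw [Filter.le_principal_iff]
    exact Filter.mem_map.2 (Filter.Eventually.of_forall fun n => abs_le.1 (hb n))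
  obtain ⟨L, _, hL⟩ := (isCompact_Icc (a := -K) (b := K)).ultrafilter_le_nhds (U.map g) h1
  exact ⟨L, hL⟩

lemma weak_limit (U : Ultrafilter ℕ) (v : ℕ → H) (M : ℝ) (hb : ∀ n, ‖v n‖ ≤ M) :
    ∃ w : H, ∀ y : H, Tendsto (fun n => ⟪y, v n⟫) (U : Filter ℕ) (nhds ⟪y, w⟫) := by
  have key : ∀ y : H, ∃ L, Tendsto (fun n => ⟪y, v n⟫) (U : Filter ℕ) (nhds L) := by
    intro y
    refine ultra_lim_exists U _ (‖y‖ * M) fun n => ?_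
    exact (abs_real_inner_le_norm y (v n)).trans
      (mul_le_mul_of_nonneg_left (hb n) (norm_nonneg y))
  choose f hf using key
  have hadd : ∀ y z, f (y + z) = f y + f z := fun y z => by
    refine tendsto_nhds_unique (hf (y + z)) ?_
    have := (hf y).add (hf z)
    simpa [inner_add_left] using this
  have hsmul : ∀ (c : ℝ) (y : H), f (c • y) = c * f y := fun c y => by
    refine tendsto_nhds_unique (hf (c • y)) ?_
    have := (hf y).const_mul c
    simpa [real_inner_smul_left] using this
  have hbound : ∀ y, |f y| ≤ M * ‖y‖ := fun y => by
    have h1 : Tendsto (fun n => |⟪y, v n⟫|) (U : Filter ℕ) (nhds |f y|) := (hf y).abs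
    refine le_of_tendsto h1 (Filter.Eventually.of_forall fun n => ?_)
    exact (abs_real_inner_le_norm y (v n)).trans
      (by rw [mul_comm]; exact mul_le_mul_of_nonneg_right (hb n) (norm_nonneg y))
  let g : H →L[ℝ] ℝ := LinearMap.mkContinuous
    { toFun := f, map_add' := hadd, map_smul' := hsmul } M
    (fun y => by simpa [Real.norm_eq_abs] using hbound y)
  obtain ⟨w, hw⟩ := (InnerProductSpace.toDual ℝ H).surjective g
  refine ⟨w, fun y => ?_⟩
  have h2 : ⟪y, w⟫ = f y := by
    rw [real_inner_comm]
    have := congrArg (fun φ => φ y) hw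
    simpa [InnerProductSpace.toDual_apply_apply, g, LinearMap.mkContinuous_apply] using this
  rw [h2]; exact hf y

end helpers

lemma xu_lemma (a b α : ℕ → ℝ) (n₀ : ℕ) (ha : ∀ n, 0 ≤ a n)
    (hα : ∀ n, α n ∈ Set.Ioo (0 : ℝ) 1)
    (hdiv : Tendsto (fun N => ∑ n ∈ Finset.range N, α n) atTop atTop)
    (hrec : ∀ n ≥ n₀, a (n + 1) ≤ (1 - α n) * a n + α n * b n)
    (hb : ∀ ε > 0, ∀ᶠ n in atTop, b n ≤ ε) :
    Tendsto a atTop (nhds 0) := by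
  rw [Metric.tendsto_atTop]
  intro ε hε
  have hε3 : 0 < ε / 3 := by linarith
  obtain ⟨N1, hN1⟩ := (eventually_atTop).1 (hb (ε / 3) hε3)
  set N := max N1 n₀ with hN
  set P : ℕ → ℝ := fun k => ∏ i ∈ Finset.range k, (1 - α (N + i)) with hP
  have hP01 : ∀ k, 0 ≤ P k ∧ P k ≤ 1 := by
    intro k
    constructor
    · exact Finset.prod_nonneg fun i _ => by linarith [(hα (N + i)).2]
    · exact Finset.prod_le_one (fun i _ => by linarith [(hα (N + i)).2])
        (fun i _ => by linarith [(hα (N + i)).1])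
  have main : ∀ k, a (N + k) ≤ P k * a N + (1 - P k) * (ε / 3) := by
    intro k
    induction k with
    | zero => simp [hP]
    | succ k ih =>
      have hrk : a (N + k + 1) ≤ (1 - α (N + k)) * a (N + k) + α (N + k) * b (N + k) :=
        hrec (N + k) (le_trans (le_max_right _ _) (Nat.le_add_right _ _))
      have hbk : b (N + k) ≤ ε / 3 := hN1 _ (le_trans (le_max_left _ _) (Nat.le_add_right _ _))
      have h1 : 0 < α (N + k) := (hα (N + k)).1
      have h2 : α (N + k) < 1 := (hα (N + k)).2
      have hPk : P (k + 1) = P k * (1 - α (N + k)) := by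
        rw [hP]; simp [Finset.prod_range_succ]
      have : a (N + (k + 1)) ≤ (1 - α (N + k)) * (P k * a N + (1 - P k) * (ε / 3))
          + α (N + k) * (ε / 3) := by
        calc a (N + (k + 1)) = a (N + k + 1) := by ring_nf
          _ ≤ (1 - α (N + k)) * a (N + k) + α (N + k) * b (N + k) := hrk
          _ ≤ (1 - α (N + k)) * (P k * a N + (1 - P k) * (ε / 3)) + α (N + k) * (ε / 3) := by
              have := mul_le_mul_of_nonneg_left ih (by linarith : (0:ℝ) ≤ 1 - α (N + k))
              have := mul_le_mul_of_nonneg_left hbk (le_of_lt h1)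
              nlinarith
      rw [hPk]
      nlinarith
  have hPexp : ∀ k, P k ≤ Real.exp (-(∑ i ∈ Finset.range k, α (N + i))) := by
    intro k
    calc P k ≤ ∏ i ∈ Finset.range k, Real.exp (-(α (N + i))) := by
          refine Finset.prod_le_prod (fun i _ => by linarith [(hα (N + i)).2]) fun i _ => ?_
          have := Real.add_one_le_exp (-(α (N + i)))
          linarith
      _ = Real.exp (∑ i ∈ Finset.range k, -(α (N + i))) := (Real.exp_sum _ _).symm
      _ = Real.exp (-(∑ i ∈ Finset.range k, α (N + i))) := by rw [Finset.sum_neg_distrib]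
  have hsum : Tendsto (fun k => ∑ i ∈ Finset.range k, α (N + i)) atTop atTop := by
    have heq : ∀ k, ∑ i ∈ Finset.range k, α (N + i)
        = (∑ i ∈ Finset.range (N + k), α i) - ∑ i ∈ Finset.range N, α i := by
      intro k
      rw [Finset.sum_range_add]
      ring
    have h5 : Tendsto (fun k : ℕ => N + k) atTop atTop :=
      tendsto_atTop_atTop.2 fun m => ⟨m, fun n hn => by omega⟩
    have h4 : Tendsto (fun k => ∑ i ∈ Finset.range (N + k), α i) atTop atTop := hdiv.comp h5
    have h6 := tendsto_atTop_add_const_right atTop (-(∑ i ∈ Finset.range N, α i)) h4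
    refine h6.congr fun k => ?_
    rw [heq k, sub_eq_add_neg]
  have hP0 : Tendsto P atTop (nhds 0) := by
    refine squeeze_zero (fun k => (hP01 k).1) hPexp ?_
    exact Real.tendsto_exp_atBot.comp (tendsto_neg_atTop_atBot.comp hsum)
  have hPa : Tendsto (fun k => P k * a N) atTop (nhds 0) := by
    simpa using hP0.mul_const (a N)
  obtain ⟨K, hK⟩ := (eventually_atTop).1 (hPa.eventually (gt_mem_nhds hε3))
  refine ⟨N + K, fun n hn => ?_⟩
  have h1 : a n ≤ P (n - N) * a N + (1 - P (n - N)) * (ε / 3) := by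
    have := main (n - N)
    rwa [Nat.add_sub_cancel' (le_trans (Nat.le_add_right _ _) hn)] at this
  have h2 : P (n - N) * a N < ε / 3 := hK _ (by omega)
  have h3 : (1 - P (n - N)) * (ε / 3) ≤ ε / 3 := by
    have := (hP01 (n - N)).1
    nlinarith
  rw [Real.dist_eq, sub_zero, abs_of_nonneg (ha n)]
  linarith

theorem stmt_17 {H : Type*} [NormedAddCommGroup H] [InnerProductSpace ℝ H] [CompleteSpace H]
    (C : Set H) (hC : C.Nonempty) (hCc : IsClosed C) (hCv : Convex ℝ C)
    (T S : H → H) (hT : Set.MapsTo T C C) (hS : Set.MapsTo S C C)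
    (hne : ∀ x ∈ C, ∀ y ∈ C, ‖T x - T y‖ ≤ ‖x - y‖)
    (hns : ∀ x ∈ C, ∀ y ∈ C, 2 * ‖S x - S y‖ ^ 2 ≤ ‖S x - y‖ ^ 2 + ‖x - S y‖ ^ 2)
    (hFix : ∃ z ∈ C, T z = z ∧ S z = z)
    (δ : ℝ) (hδ : δ ∈ Set.Ioo (0 : ℝ) 1)
    (AT AS : H → H)
    (hAT : ∀ x, AT x = (1 - δ) • x + δ • T x)
    (hAS : ∀ x, AS x = (1 - δ) • x + δ • S x)
    (u : H) (hu : u ∈ C)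
    (α β : ℕ → ℝ) (hα : ∀ n, α n ∈ Set.Ioo (0 : ℝ) 1) (hβ : ∀ n, β n ∈ Set.Icc (0 : ℝ) 1)
    (hα0 : Filter.Tendsto α Filter.atTop (nhds 0))
    (hαdiv : Filter.Tendsto (fun N => ∑ n ∈ Finset.range N, α n) Filter.atTop Filter.atTop)
    (hβliminf : 0 < Filter.liminf (fun n => β n * (1 - β n)) Filter.atTop)
    (x : ℕ → H) (hx1 : x 1 ∈ C)
    (hrec : ∀ n ≥ 1, x (n + 1) =
      α n • u + (1 - α n) • (β n • AT (x n) + (1 - β n) • AS (x n))) :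
    ∃ p, p ∈ C ∧ T p = p ∧ S p = p ∧
      (∀ y ∈ C, T y = y → S y = y → ‖u - p‖ ≤ ‖u - y‖) ∧
      Filter.Tendsto x Filter.atTop (nhds p) := by
  classical
  obtain ⟨hδ0, hδ1⟩ := hδ
  -- quasi-nonexpansiveness of S
  have hSq : ∀ v ∈ C, ∀ z ∈ C, S z = z → ‖S v - z‖ ≤ ‖v - z‖ := by
    intro v hv z hz hzfix
    have h1 := hns v hv z hz
    rw [hzfix] at h1
    have h2 : ‖S v - z‖ ^ 2 ≤ ‖v - z‖ ^ 2 := by linarith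
    exact (pow_le_pow_iff_left₀ (norm_nonneg _) (norm_nonneg _) two_ne_zero).1 h2
  set F : Set H := {z | z ∈ C ∧ T z = z ∧ S z = z} with hF
  have hFC : ∀ z ∈ F, z ∈ C := fun z hz => hz.1
  have hFne : F.Nonempty := by obtain ⟨z, hz, h1, h2⟩ := hFix; exact ⟨z, hz, h1, h2⟩
  -- F is convex
  have hFconv : Convex ℝ F := by
    intro z₁ hz₁ z₂ hz₂ s t hs ht hst
    set w := s • z₁ + t • z₂ with hw
    have hwC : w ∈ C := hCv hz₁.1 hz₂.1 hs ht hst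
    have ht' : t = 1 - s := by linarith
    have hwz₁ : w - z₁ = t • (z₂ - z₁) := by rw [hw, ht']; module
    have hwz₂ : w - z₂ = s • (z₁ - z₂) := by rw [hw, ht']; module
    have hfix : ∀ R : H → H, ‖R w - z₁‖ ≤ ‖w - z₁‖ → ‖R w - z₂‖ ≤ ‖w - z₂‖ → R w = w := by
      intro R h1 h2
      have hdecomp : R w - w = s • (R w - z₁) + (1 - s) • (R w - z₂) := by
        rw [hw, ht']; module
      have hcs := comb_sq s (R w - z₁) (R w - z₂)
      rw [← hdecomp] at hcs
      have hsub : (R w - z₁) - (R w - z₂) = z₂ - z₁ := by abel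
      rw [hsub] at hcs
      have e1 : ‖w - z₁‖ = t * ‖z₂ - z₁‖ := by
        rw [hwz₁, norm_smul, Real.norm_eq_abs, abs_of_nonneg ht]
      have e2 : ‖w - z₂‖ = s * ‖z₁ - z₂‖ := by
        rw [hwz₂, norm_smul, Real.norm_eq_abs, abs_of_nonneg hs]
      have e3 : ‖z₁ - z₂‖ = ‖z₂ - z₁‖ := norm_sub_rev _ _
      have h1sq : ‖R w - z₁‖ ^ 2 ≤ (t * ‖z₂ - z₁‖) ^ 2 := by
        rw [← e1]; exact pow_le_pow_left₀ (norm_nonneg _) h1 2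
      have h2sq : ‖R w - z₂‖ ^ 2 ≤ (s * ‖z₂ - z₁‖) ^ 2 := by
        rw [← e3, ← e2]; exact pow_le_pow_left₀ (norm_nonneg _) h2 2
      have hz : ‖R w - w‖ ^ 2 ≤ 0 := by
        have hs1 : 1 - s = t := by linarith
        rw [hs1] at hcs
        rw [hcs]
        have hA := mul_le_mul_of_nonneg_left h1sq hs
        have hB := mul_le_mul_of_nonneg_left h2sq ht
        have e0 : s * (t * ‖z₂ - z₁‖) ^ 2 + t * (s * ‖z₂ - z₁‖) ^ 2
            - s * t * ‖z₂ - z₁‖ ^ 2 = 0 := by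
          linear_combination (s * t * ‖z₂ - z₁‖ ^ 2) * hst
        linarith
      have : ‖R w - w‖ = 0 := by nlinarith [sq_nonneg ‖R w - w‖, norm_nonneg (R w - w)]
      rw [norm_eq_zero, sub_eq_zero] at this
      exact this
    refine ⟨hwC, ?_, ?_⟩
    · refine hfix T ?_ ?_
      · have := hne w hwC z₁ hz₁.1; rwa [hz₁.2.1] at this
      · have := hne w hwC z₂ hz₂.1; rwa [hz₂.2.1] at this
    · exact hfix S (hSq w hwC z₁ hz₁.1 hz₁.2.2) (hSq w hwC z₂ hz₂.1 hz₂.2.2)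
  -- F is closed
  have hFclosed : IsClosed F := by
    refine IsSeqClosed.isClosed ?_
    intro z q hz hq
    have hqC : q ∈ C := hCc.mem_of_tendsto hq (Filter.Eventually.of_forall fun n => (hz n).1)
    have hd : Tendsto (fun n => ‖q - z n‖) atTop (nhds 0) :=
      (tendsto_iff_norm_sub_tendsto_zero.1 hq).congr fun n => norm_sub_rev (z n) q
    have hTq : T q = q := by
      have hb : ∀ n, ‖T q - q‖ ≤ 2 * ‖q - z n‖ := by
        intro n
        calc ‖T q - q‖ ≤ ‖T q - T (z n)‖ + ‖T (z n) - q‖ := norm_sub_le_norm_sub_add_norm_sub _ _ _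
          _ = ‖T q - T (z n)‖ + ‖z n - q‖ := by rw [(hz n).2.1]
          _ ≤ ‖q - z n‖ + ‖z n - q‖ := add_le_add (hne q hqC (z n) (hz n).1) le_rfl
          _ = 2 * ‖q - z n‖ := by rw [norm_sub_rev (z n) q]; ring
      have h0 : ‖T q - q‖ ≤ 0 :=
        ge_of_tendsto (by simpa using hd.const_mul 2) (Filter.Eventually.of_forall hb)
      have : ‖T q - q‖ = 0 := le_antisymm h0 (norm_nonneg _)
      rw [norm_eq_zero, sub_eq_zero] at this
      exact this
    have hSz : S q = q := by
      have hb : ∀ n, ‖S q - q‖ ≤ 2 * ‖q - z n‖ := by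
        intro n
        calc ‖S q - q‖ ≤ ‖S q - z n‖ + ‖z n - q‖ := norm_sub_le_norm_sub_add_norm_sub _ _ _
          _ ≤ ‖q - z n‖ + ‖z n - q‖ :=
              add_le_add (hSq q hqC (z n) (hz n).1 (hz n).2.2) le_rfl
          _ = 2 * ‖q - z n‖ := by rw [norm_sub_rev (z n) q]; ring
      have h0 : ‖S q - q‖ ≤ 0 :=
        ge_of_tendsto (by simpa using hd.const_mul 2) (Filter.Eventually.of_forall hb)
      have : ‖S q - q‖ = 0 := le_antisymm h0 (norm_nonneg _)
      rw [norm_eq_zero, sub_eq_zero] at this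
      exact this
    exact ⟨hqC, hTq, hSz⟩
  obtain ⟨p, hpF, hpvar, hpmin⟩ := proj_exists F hFne hFclosed hFconv u
  obtain ⟨hpC, hpT, hpS⟩ := hpF
  -- membership of the iterates in C
  have hATC : ∀ v ∈ C, AT v ∈ C := fun v hv => by
    rw [hAT]; exact hCv hv (hT hv) (by linarith) (le_of_lt hδ0) (by ring)
  have hASC : ∀ v ∈ C, AS v ∈ C := fun v hv => by
    rw [hAS]; exact hCv hv (hS hv) (by linarith) (le_of_lt hδ0) (by ring)
  set y : ℕ → H := fun n => β n • AT (x n) + (1 - β n) • AS (x n) with hydef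
  have hrec' : ∀ n, 1 ≤ n → x (n + 1) = α n • u + (1 - α n) • y n := fun n hn => hrec n hn
  have hyC : ∀ n, x n ∈ C → y n ∈ C := fun n hx =>
    hCv (hATC _ hx) (hASC _ hx) (hβ n).1 (by linarith [(hβ n).2]) (by ring)
  have hxC : ∀ n, 1 ≤ n → x n ∈ C := by
    intro n hn
    induction n, hn using Nat.le_induction with
    | base => exact hx1
    | succ n hn ih =>
      rw [hrec' n hn]
      exact hCv hu (hyC n ih) (le_of_lt (hα n).1) (by linarith [(hα n).2]) (by ring)
  -- quadratic estimates
  have hATsq : ∀ v ∈ C, ‖AT v - p‖ ^ 2 ≤ ‖v - p‖ ^ 2 - δ * (1 - δ) * ‖v - T v‖ ^ 2 := by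
    intro v hv
    have e : AT v - p = (1 - δ) • (v - p) + (1 - (1 - δ)) • (T v - p) := by
      rw [hAT]; module
    rw [e, comb_sq]
    have hsub : (v - p) - (T v - p) = v - T v := by abel
    rw [hsub]
    have hTv : ‖T v - p‖ ≤ ‖v - p‖ := by
      have h5 := hne v hv p hpC; rwa [hpT] at h5
    have hTv2 : ‖T v - p‖ ^ 2 ≤ ‖v - p‖ ^ 2 := by
      exact pow_le_pow_left₀ (norm_nonneg _) hTv 2
    nlinarith [mul_le_mul_of_nonneg_left hTv2 hδ0.le]
  have hASsq : ∀ v ∈ C, ‖AS v - p‖ ^ 2 ≤ ‖v - p‖ ^ 2 - δ * (1 - δ) * ‖v - S v‖ ^ 2 := by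
    intro v hv
    have e : AS v - p = (1 - δ) • (v - p) + (1 - (1 - δ)) • (S v - p) := by
      rw [hAS]; module
    rw [e, comb_sq]
    have hsub : (v - p) - (S v - p) = v - S v := by abel
    rw [hsub]
    have hSv : ‖S v - p‖ ≤ ‖v - p‖ := hSq v hv p hpC hpS
    have hSv2 : ‖S v - p‖ ^ 2 ≤ ‖v - p‖ ^ 2 := by
      exact pow_le_pow_left₀ (norm_nonneg _) hSv 2
    nlinarith [mul_le_mul_of_nonneg_left hSv2 hδ0.le]
  have hysq : ∀ n, 1 ≤ n → ‖y n - p‖ ^ 2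
      ≤ ‖x n - p‖ ^ 2 - δ * (1 - δ) * (β n * ‖x n - T (x n)‖ ^ 2
        + (1 - β n) * ‖x n - S (x n)‖ ^ 2) := by
    intro n hn
    have hxn := hxC n hn
    have e : y n - p = β n • (AT (x n) - p) + (1 - β n) • (AS (x n) - p) := by
      simp only [hydef]; module
    rw [e, comb_sq]
    have hsub : (AT (x n) - p) - (AS (x n) - p) = AT (x n) - AS (x n) := by abel
    rw [hsub]
    have h1 := hATsq _ hxn
    have h2 := hASsq _ hxn
    have hb0 := (hβ n).1
    have hb1 := (hβ n).2
    nlinarith [mul_le_mul_of_nonneg_left h1 hb0,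
      mul_le_mul_of_nonneg_left h2 (by linarith : (0:ℝ) ≤ 1 - β n),
      mul_nonneg (mul_nonneg hb0 (by linarith : (0:ℝ) ≤ 1 - β n))
        (sq_nonneg ‖AT (x n) - AS (x n)‖)]
  have hEnonneg : ∀ n, 0 ≤ δ * (1 - δ) * (β n * ‖x n - T (x n)‖ ^ 2
      + (1 - β n) * ‖x n - S (x n)‖ ^ 2) := by
    intro n
    have hb0 := (hβ n).1
    have hb1 := (hβ n).2
    apply mul_nonneg (by nlinarith)
    exact add_nonneg (mul_nonneg hb0 (sq_nonneg _))
      (mul_nonneg (by linarith) (sq_nonneg _))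
  have hy_le : ∀ n, 1 ≤ n → ‖y n - p‖ ≤ ‖x n - p‖ := by
    intro n hn
    have h := hysq n hn
    have h2 : ‖y n - p‖ ^ 2 ≤ ‖x n - p‖ ^ 2 := by linarith [hEnonneg n]
    exact (pow_le_pow_iff_left₀ (norm_nonneg _) (norm_nonneg _) two_ne_zero).1 h2
  -- boundedness
  set M := max ‖x 1 - p‖ ‖u - p‖ with hM
  have hMu : ‖u - p‖ ≤ M := le_max_right _ _
  have hMx : ∀ n, 1 ≤ n → ‖x n - p‖ ≤ M := by
    intro n hn
    induction n, hn using Nat.le_induction with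
    | base => exact le_max_left _ _
    | succ n hn ih =>
      have e : x (n + 1) - p = α n • (u - p) + (1 - α n) • (y n - p) := by
        rw [hrec' n hn]; module
      have h1 : ‖x (n + 1) - p‖ ≤ α n * ‖u - p‖ + (1 - α n) * ‖y n - p‖ := by
        rw [e]
        refine (norm_add_le _ _).trans ?_
        rw [norm_smul, norm_smul, Real.norm_eq_abs, Real.norm_eq_abs,
          abs_of_nonneg (hα n).1.le, abs_of_nonneg (by linarith [(hα n).2] : (0:ℝ) ≤ 1 - α n)]
      have h2 := (hy_le n hn).trans ih
      have h3 := (hα n).1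
      have h4 := (hα n).2
      nlinarith
  have hM0 : 0 ≤ M := le_trans (norm_nonneg _) (le_max_left _ _)
  -- Key inequality (A)
  have hKA : ∀ n, 1 ≤ n → ‖x (n + 1) - p‖ ^ 2 ≤ (1 - α n) * ‖x n - p‖ ^ 2
      + α n * (2 * ⟪u - p, x (n + 1) - p⟫) := by
    intro n hn
    have e : x (n + 1) - p = α n • (u - p) + (1 - α n) • (y n - p) := by
      rw [hrec' n hn]; module
    have h1 := add_sq_le' (α n • (u - p)) ((1 - α n) • (y n - p))
    rw [← e] at h1
    rw [real_inner_smul_left] at h1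
    have h2 : ‖(1 - α n) • (y n - p)‖ ^ 2 = (1 - α n) ^ 2 * ‖y n - p‖ ^ 2 := by
      rw [norm_smul, Real.norm_eq_abs, mul_pow, sq_abs]
    rw [h2] at h1
    have h3 : ‖y n - p‖ ^ 2 ≤ ‖x n - p‖ ^ 2 := by
      have := hy_le n hn
      nlinarith [norm_nonneg (y n - p), norm_nonneg (x n - p)]
    have h4 := (hα n).1
    have h5 := (hα n).2
    nlinarith [sq_nonneg (1 - α n), sq_nonneg ‖y n - p‖]
  -- Key inequality (B)
  have hKB : ∀ n, 1 ≤ n → (1 - α n) * (δ * (1 - δ) * (β n * ‖x n - T (x n)‖ ^ 2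
      + (1 - β n) * ‖x n - S (x n)‖ ^ 2))
      ≤ α n * ‖u - p‖ ^ 2 + ‖x n - p‖ ^ 2 - ‖x (n + 1) - p‖ ^ 2 := by
    intro n hn
    have e : x (n + 1) - p = α n • (u - p) + (1 - (α n)) • (y n - p) := by
      rw [hrec' n hn]; module
    have h1 : ‖x (n + 1) - p‖ ^ 2 = α n * ‖u - p‖ ^ 2 + (1 - α n) * ‖y n - p‖ ^ 2
        - α n * (1 - α n) * ‖(u - p) - (y n - p)‖ ^ 2 := by
      rw [e, comb_sq]
    have h2 := hysq n hn
    have h3 := (hα n).1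
    have h4 := (hα n).2
    have h5 := sq_nonneg ‖(u - p) - (y n - p)‖
    have h6 := sq_nonneg ‖x n - p‖
    nlinarith [mul_le_mul_of_nonneg_left h2 (by linarith : (0:ℝ) ≤ 1 - α n),
      mul_nonneg (mul_nonneg h3.le (by linarith : (0:ℝ) ≤ 1 - α n)) h5]
  -- key weak-cluster-point estimate
  have key : ∀ v : ℕ → H, (∀ n, v n ∈ C) → (∀ n, ‖v n - p‖ ≤ M) →
      Tendsto (fun n => ‖v n - T (v n)‖) atTop (nhds 0) →
      Tendsto (fun n => ‖v n - S (v n)‖) atTop (nhds 0) →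
      ∀ ε > 0, ∀ᶠ n in atTop, ⟪u - p, v n - p⟫ < ε := by
    intro v hvC hvM hvT hvS ε hε
    by_contra hcon
    have hfreq : ∃ᶠ n in atTop, ε ≤ ⟪u - p, v n - p⟫ := by
      rw [Filter.not_eventually] at hcon
      exact hcon.mono fun n h => le_of_not_gt h
    haveI hLne : (atTop ⊓ Filter.principal {n | ε ≤ ⟪u - p, v n - p⟫}).NeBot :=
      Filter.frequently_iff_neBot.1 hfreq
    set U : Ultrafilter ℕ :=
      Ultrafilter.of (atTop ⊓ Filter.principal {n | ε ≤ ⟪u - p, v n - p⟫}) with hUdef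
    have hUL : (U : Filter ℕ) ≤ atTop ⊓ Filter.principal {n | ε ≤ ⟪u - p, v n - p⟫} :=
      Ultrafilter.of_le _
    have hUtop : (U : Filter ℕ) ≤ atTop := hUL.trans inf_le_left
    have hUset : ∀ᶠ n in (U : Filter ℕ), ε ≤ ⟪u - p, v n - p⟫ :=
      Filter.le_principal_iff.1 (hUL.trans inf_le_right)
    have hvb : ∀ n, ‖v n‖ ≤ M + ‖p‖ := fun n => by
      have e : v n = (v n - p) + p := by abel
      calc ‖v n‖ = ‖(v n - p) + p‖ := by rw [← e]
        _ ≤ ‖v n - p‖ + ‖p‖ := norm_add_le _ _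
        _ ≤ M + ‖p‖ := add_le_add_left (hvM n) _
    obtain ⟨w, hw⟩ := weak_limit U v (M + ‖p‖) hvb
    have hwd : ∀ c : H, Tendsto (fun n => ⟪c, v n - w⟫) (U : Filter ℕ) (nhds 0) := by
      intro c
      have h1 := (hw c).sub_const ⟪c, w⟫
      rw [sub_self] at h1
      exact h1.congr fun n => (inner_sub_right _ _ _).symm
    obtain ⟨q, hqC, hqvar, -⟩ := proj_exists C hC hCc hCv w
    have hwq : Tendsto (fun n => ⟪w - q, v n - q⟫) (U : Filter ℕ) (nhds ⟪w - q, w - q⟫) := by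
      have h1 := (hw (w - q)).sub_const ⟪w - q, q⟫
      have h2 : ⟪w - q, w⟫ - ⟪w - q, q⟫ = ⟪w - q, w - q⟫ := (inner_sub_right _ _ _).symm
      rw [h2] at h1
      exact h1.congr fun n => (inner_sub_right _ _ _).symm
    have hwqle : ⟪w - q, w - q⟫ ≤ (0:ℝ) :=
      le_of_tendsto hwq (Filter.Eventually.of_forall fun n => hqvar (v n) (hvC n))
    have hwC : w ∈ C := by
      have h1 : w - q = 0 := real_inner_self_nonpos.1 hwqle
      have h2 : w = q := by rwa [sub_eq_zero] at h1
      rw [h2]; exact hqC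
    set M' := M + ‖p - w‖ with hM'
    have hvw : ∀ n, ‖v n - w‖ ≤ M' := fun n => by
      calc ‖v n - w‖ = ‖(v n - p) + (p - w)‖ := by rw [sub_add_sub_cancel]
        _ ≤ ‖v n - p‖ + ‖p - w‖ := norm_add_le _ _
        _ ≤ M + ‖p - w‖ := add_le_add_left (hvM n) _
    -- demiclosedness of I - T
    have hTw : T w = w := by
      set c := w - T w with hc
      have hineq : ∀ n, ‖c‖ ^ 2 ≤ 2 * ‖v n - T (v n)‖ * M' + ‖v n - T (v n)‖ ^ 2
          - 2 * ⟪c, v n - w⟫ := by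
        intro n
        have h1 : ‖v n - T w‖ ≤ ‖v n - T (v n)‖ + ‖v n - w‖ := by
          calc ‖v n - T w‖ ≤ ‖v n - T (v n)‖ + ‖T (v n) - T w‖ :=
                norm_sub_le_norm_sub_add_norm_sub _ _ _
            _ ≤ ‖v n - T (v n)‖ + ‖v n - w‖ := add_le_add_right (hne (v n) (hvC n) w hwC) _
        have h2 : ‖v n - T w‖ ^ 2 ≤ (‖v n - T (v n)‖ + ‖v n - w‖) ^ 2 :=
          pow_le_pow_left₀ (norm_nonneg _) h1 2
        have h3 : ‖v n - T w‖ ^ 2 = ‖v n - w‖ ^ 2 + 2 * ⟪v n - w, c⟫ + ‖c‖ ^ 2 := by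
          have e : v n - T w = (v n - w) + c := by rw [hc]; abel
          rw [e, norm_add_sq_real]
        have h4 : ⟪v n - w, c⟫ = ⟪c, v n - w⟫ := real_inner_comm _ _
        have h5 := hvw n
        have h6 := norm_nonneg (v n - T (v n))
        nlinarith [mul_le_mul_of_nonneg_left h5 h6]
      have hlim : Tendsto (fun n => 2 * ‖v n - T (v n)‖ * M' + ‖v n - T (v n)‖ ^ 2
          - 2 * ⟪c, v n - w⟫) (U : Filter ℕ) (nhds 0) := by
        have l1 : Tendsto (fun n => ‖v n - T (v n)‖) (U : Filter ℕ) (nhds 0) :=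
          hvT.mono_left hUtop
        have l2 := (l1.const_mul 2).mul_const M'
        have l3 := l1.pow 2
        have l4 := (hwd c).const_mul 2
        have := (l2.add l3).sub l4
        simpa using this
      have hle : ‖c‖ ^ 2 ≤ 0 := ge_of_tendsto hlim (Filter.Eventually.of_forall hineq)
      have h9 : ‖c‖ ^ 2 = 0 := le_antisymm hle (sq_nonneg _)
      have h10 : c = 0 := by rwa [sq_eq_zero_iff, norm_eq_zero] at h9
      rw [hc, sub_eq_zero] at h10
      exact h10.symm
    -- demiclosedness of I - S
    have hSw : S w = w := by
      set c := w - S w with hc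
      have hineq : ∀ n, ‖c‖ ^ 2 ≤ 7 * ‖v n - S (v n)‖ ^ 2 + 6 * ‖v n - S (v n)‖ * M'
          + 4 * ‖v n - S (v n)‖ * ‖c‖ - 2 * ⟪c, v n - w⟫ := by
        intro n
        have hη0 : (0:ℝ) ≤ ‖v n - S (v n)‖ := norm_nonneg _
        have hnsn := hns (v n) (hvC n) w hwC
        have h2 : ‖v n - S w‖ ≤ ‖v n - S (v n)‖ + ‖S (v n) - S w‖ :=
          norm_sub_le_norm_sub_add_norm_sub _ _ _
        have h2sq : ‖v n - S w‖ ^ 2 ≤ (‖v n - S (v n)‖ + ‖S (v n) - S w‖) ^ 2 :=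
          pow_le_pow_left₀ (norm_nonneg _) h2 2
        have h3 : ‖S (v n) - w‖ ≤ ‖v n - S (v n)‖ + ‖v n - w‖ := by
          calc ‖S (v n) - w‖ ≤ ‖S (v n) - v n‖ + ‖v n - w‖ :=
                norm_sub_le_norm_sub_add_norm_sub _ _ _
            _ = ‖v n - S (v n)‖ + ‖v n - w‖ := by rw [norm_sub_rev]
        have h3sq : ‖S (v n) - w‖ ^ 2 ≤ (‖v n - S (v n)‖ + ‖v n - w‖) ^ 2 :=
          pow_le_pow_left₀ (norm_nonneg _) h3 2
        have h4 : ‖v n - S w‖ ^ 2 = ‖v n - w‖ ^ 2 + 2 * ⟪v n - w, c⟫ + ‖c‖ ^ 2 := by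
          have e : v n - S w = (v n - w) + c := by rw [hc]; abel
          rw [e, norm_add_sq_real]
        have hB : ‖S (v n) - S w‖ ≤ ‖v n - S (v n)‖ + ‖v n - w‖ + ‖c‖ := by
          calc ‖S (v n) - S w‖ ≤ ‖S (v n) - w‖ + ‖w - S w‖ :=
                norm_sub_le_norm_sub_add_norm_sub _ _ _
            _ ≤ (‖v n - S (v n)‖ + ‖v n - w‖) + ‖c‖ := add_le_add_left h3 _
        have h5 := hvw n
        have h4' : ⟪v n - w, c⟫ = ⟪c, v n - w⟫ := real_inner_comm _ _
        have hB0 : (0:ℝ) ≤ ‖S (v n) - S w‖ := norm_nonneg _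
        have hE0 : (0:ℝ) ≤ ‖v n - w‖ := norm_nonneg _
        nlinarith [mul_le_mul_of_nonneg_left hB hη0, mul_le_mul_of_nonneg_left h5 hη0,
          sq_nonneg ‖v n - S (v n)‖, sq_nonneg ‖c‖, norm_nonneg c,
          mul_nonneg hη0 hB0, mul_nonneg hη0 hE0]
      have hlim : Tendsto (fun n => 7 * ‖v n - S (v n)‖ ^ 2 + 6 * ‖v n - S (v n)‖ * M'
          + 4 * ‖v n - S (v n)‖ * ‖c‖ - 2 * ⟪c, v n - w⟫) (U : Filter ℕ) (nhds 0) := by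
        have l1 : Tendsto (fun n => ‖v n - S (v n)‖) (U : Filter ℕ) (nhds 0) :=
          hvS.mono_left hUtop
        have l2 := (l1.pow 2).const_mul 7
        have l3 := (l1.const_mul 6).mul_const M'
        have l4 := (l1.const_mul 4).mul_const ‖c‖
        have l5 := (hwd c).const_mul 2
        have := ((l2.add l3).add l4).sub l5
        simpa using this
      have hle : ‖c‖ ^ 2 ≤ 0 := ge_of_tendsto hlim (Filter.Eventually.of_forall hineq)
      have h9 : ‖c‖ ^ 2 = 0 := le_antisymm hle (sq_nonneg _)
      have h10 : c = 0 := by rwa [sq_eq_zero_iff, norm_eq_zero] at h9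
      rw [hc, sub_eq_zero] at h10
      exact h10.symm
    have hwF : w ∈ F := ⟨hwC, hTw, hSw⟩
    have hgl : Tendsto (fun n => ⟪u - p, v n - p⟫) (U : Filter ℕ) (nhds ⟪u - p, w - p⟫) := by
      have h1 := (hw (u - p)).sub_const ⟪u - p, p⟫
      have h2 : ⟪u - p, w⟫ - ⟪u - p, p⟫ = ⟪u - p, w - p⟫ := (inner_sub_right _ _ _).symm
      rw [h2] at h1
      exact h1.congr fun n => (inner_sub_right _ _ _).symm
    have h2 : ε ≤ ⟪u - p, w - p⟫ := ge_of_tendsto hgl hUset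
    have h3 := hpvar w hwF
    linarith
  -- eventual lower bound on β n * (1 - β n)
  set ε₀ := liminf (fun n => β n * (1 - β n)) atTop / 2 with hε₀def
  have hε₀ : 0 < ε₀ := by rw [hε₀def]; linarith
  have hβbdd : IsBoundedUnder (· ≥ ·) atTop (fun n => β n * (1 - β n)) :=
    Filter.isBoundedUnder_of ⟨0, fun n =>
      mul_nonneg (hβ n).1 (by linarith [(hβ n).2])⟩
  have hβev : ∀ᶠ n in atTop, ε₀ < β n * (1 - β n) :=
    eventually_lt_of_lt_liminf (by rw [hε₀def]; linarith) hβbdd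
  -- extraction of asymptotic regularity
  have reg : ∀ σ : ℕ → ℕ, Tendsto σ atTop atTop →
      Tendsto (fun n => δ * (1 - δ) * (β (σ n) * ‖x (σ n) - T (x (σ n))‖ ^ 2
        + (1 - β (σ n)) * ‖x (σ n) - S (x (σ n))‖ ^ 2)) atTop (nhds 0) →
      Tendsto (fun n => ‖x (σ n) - T (x (σ n))‖) atTop (nhds 0) ∧
      Tendsto (fun n => ‖x (σ n) - S (x (σ n))‖) atTop (nhds 0) := by
    intro σ hσtop hE
    have hβσ : ∀ᶠ n in atTop, ε₀ < β (σ n) * (1 - β (σ n)) := hσtop.eventually hβev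
    have hc : 0 < δ * (1 - δ) * ε₀ := mul_pos (mul_pos hδ0 (by linarith)) hε₀
    have hsq : ∀ R : H → H,
        (∀ᶠ n in atTop, δ * (1 - δ) * (ε₀ * ‖x (σ n) - R (x (σ n))‖ ^ 2)
          ≤ δ * (1 - δ) * (β (σ n) * ‖x (σ n) - T (x (σ n))‖ ^ 2
            + (1 - β (σ n)) * ‖x (σ n) - S (x (σ n))‖ ^ 2)) →
        Tendsto (fun n => ‖x (σ n) - R (x (σ n))‖) atTop (nhds 0) := by
      intro R hev
      have h2 : Tendsto (fun n => ‖x (σ n) - R (x (σ n))‖ ^ 2) atTop (nhds 0) := by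
        have hEc : Tendsto (fun n => (δ * (1 - δ) * ε₀)⁻¹
            * (δ * (1 - δ) * (β (σ n) * ‖x (σ n) - T (x (σ n))‖ ^ 2
              + (1 - β (σ n)) * ‖x (σ n) - S (x (σ n))‖ ^ 2))) atTop (nhds 0) := by
          simpa using hE.const_mul (δ * (1 - δ) * ε₀)⁻¹
        refine tendsto_of_tendsto_of_tendsto_of_le_of_le' tendsto_const_nhds hEc ?_ ?_
        · exact Filter.Eventually.of_forall fun n => sq_nonneg _
        · refine hev.mono fun n h => ?_
          rw [← mul_le_mul_iff_of_pos_left hc, ← mul_assoc, mul_inv_cancel₀ hc.ne', one_mul]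
          calc δ * (1 - δ) * ε₀ * ‖x (σ n) - R (x (σ n))‖ ^ 2
              = δ * (1 - δ) * (ε₀ * ‖x (σ n) - R (x (σ n))‖ ^ 2) := by ring
            _ ≤ δ * (1 - δ) * (β (σ n) * ‖x (σ n) - T (x (σ n))‖ ^ 2
                + (1 - β (σ n)) * ‖x (σ n) - S (x (σ n))‖ ^ 2) := h
      have h3 := h2.sqrt
      rw [Real.sqrt_zero] at h3
      exact h3.congr fun n => Real.sqrt_sq (norm_nonneg _)
    constructor
    · refine hsq T (hβσ.mono fun n h => ?_)
      have hb0 := (hβ (σ n)).1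
      have hb1 := (hβ (σ n)).2
      have hβge : ε₀ ≤ β (σ n) := by nlinarith
      have h6 : (0:ℝ) ≤ δ * (1 - δ) := by nlinarith
      have h7 : (0:ℝ) ≤ (1 - β (σ n)) * ‖x (σ n) - S (x (σ n))‖ ^ 2 :=
        mul_nonneg (by linarith) (sq_nonneg _)
      have h8 : ε₀ * ‖x (σ n) - T (x (σ n))‖ ^ 2 ≤ β (σ n) * ‖x (σ n) - T (x (σ n))‖ ^ 2 :=
        mul_le_mul_of_nonneg_right hβge (sq_nonneg _)
      exact mul_le_mul_of_nonneg_left (by linarith) h6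
    · refine hsq S (hβσ.mono fun n h => ?_)
      have hb0 := (hβ (σ n)).1
      have hb1 := (hβ (σ n)).2
      have hβge : ε₀ ≤ 1 - β (σ n) := by nlinarith
      have h6 : (0:ℝ) ≤ δ * (1 - δ) := by nlinarith
      have h7 : (0:ℝ) ≤ β (σ n) * ‖x (σ n) - T (x (σ n))‖ ^ 2 :=
        mul_nonneg hb0 (sq_nonneg _)
      have h8 : ε₀ * ‖x (σ n) - S (x (σ n))‖ ^ 2 ≤ (1 - β (σ n)) * ‖x (σ n) - S (x (σ n))‖ ^ 2 :=
        mul_le_mul_of_nonneg_right hβge (sq_nonneg _)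
      exact mul_le_mul_of_nonneg_left (by linarith) h6
  have hαhalf : ∀ᶠ n in atTop, α n < 1 / 2 :=
    hα0.eventually (gt_mem_nhds (by norm_num : (0:ℝ) < 1 / 2))
  -- main convergence of ‖x n - p‖²
  have ha0 : Tendsto (fun n => ‖x n - p‖ ^ 2) atTop (nhds 0) := by
    by_cases hcase : ∃ N, ∀ n ≥ N, ‖x (n + 1) - p‖ ^ 2 ≤ ‖x n - p‖ ^ 2
    · -- Case A : eventually nonincreasing
      obtain ⟨N₀', hN₀'⟩ := hcase
      set N₀ := max N₀' 1 with hN₀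
      set b' : ℕ → ℝ := fun k => ‖x (N₀ + k) - p‖ ^ 2 with hb'
      have hanti : Antitone b' := antitone_nat_of_succ_le fun k =>
        hN₀' (N₀ + k) (le_trans (le_max_left _ _) (Nat.le_add_right _ _))
      have hbdd : BddBelow (Set.range b') := ⟨0, fun z ⟨k, hk⟩ => hk ▸ sq_nonneg _⟩
      have hconv := tendsto_atTop_ciInf hanti hbdd
      have hxa : Tendsto (fun n => ‖x n - p‖ ^ 2) atTop (nhds (⨅ k, b' k)) := by
        refine (hconv.comp (tendsto_sub_atTop_nat N₀)).congr' ?_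
        filter_upwards [eventually_ge_atTop N₀] with n hn
        simp only [Function.comp_apply, hb']
        rw [Nat.add_sub_cancel' hn]
      have hxa1 : Tendsto (fun n => ‖x (n + 1) - p‖ ^ 2) atTop (nhds (⨅ k, b' k)) :=
        hxa.comp (tendsto_add_atTop_nat 1)
      have hdiff : Tendsto (fun n => ‖x n - p‖ ^ 2 - ‖x (n + 1) - p‖ ^ 2) atTop (nhds 0) := by
        have := hxa.sub hxa1
        simpa using this
      have hEt : Tendsto (fun n => δ * (1 - δ) * (β n * ‖x n - T (x n)‖ ^ 2
          + (1 - β n) * ‖x n - S (x n)‖ ^ 2)) atTop (nhds 0) := by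
        have hupper : Tendsto (fun n => 2 * (α n * ‖u - p‖ ^ 2
            + (‖x n - p‖ ^ 2 - ‖x (n + 1) - p‖ ^ 2))) atTop (nhds 0) := by
          have := ((hα0.mul_const (‖u - p‖ ^ 2)).add hdiff).const_mul 2
          simpa using this
        refine tendsto_of_tendsto_of_tendsto_of_le_of_le' tendsto_const_nhds hupper
          (Filter.Eventually.of_forall hEnonneg) ?_
        filter_upwards [hαhalf, eventually_ge_atTop 1] with n hn hn1
        have h1 := hKB n hn1
        have h2 := hEnonneg n
        have h3 := (hα n).1
        nlinarith
      obtain ⟨hTreg, hSreg⟩ := reg (fun n => n + 1) (tendsto_add_atTop_nat 1)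
        (hEt.comp (tendsto_add_atTop_nat 1))
      have hkey := key (fun n => x (n + 1)) (fun n => hxC (n + 1) (Nat.succ_le_succ (Nat.zero_le n)))
        (fun n => hMx (n + 1) (Nat.succ_le_succ (Nat.zero_le n))) hTreg hSreg
      have hbX : ∀ ε > 0, ∀ᶠ n in atTop, 2 * ⟪u - p, x (n + 1) - p⟫ ≤ ε := by
        intro ε hεp
        exact (hkey (ε / 2) (by linarith)).mono fun n h => by linarith
      exact xu_lemma (fun n => ‖x n - p‖ ^ 2) (fun n => 2 * ⟪u - p, x (n + 1) - p⟫) α 1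
        (fun n => sq_nonneg _) hα hαdiv (fun n hn => hKA n hn) hbX
    · -- Case B
      push_neg at hcase
      set Ppred : ℕ → Prop := fun k => 1 ≤ k ∧ ‖x k - p‖ ^ 2 < ‖x (k + 1) - p‖ ^ 2 with hPdef
      haveI : DecidablePred Ppred := Classical.decPred _
      obtain ⟨n₁, hn₁ge, hn₁lt⟩ := hcase 1
      have hPn₁ : Ppred n₁ := ⟨hn₁ge, hn₁lt⟩
      set τ : ℕ → ℕ := fun n => Nat.findGreatest Ppred n with hτdef
      have hτle : ∀ n, τ n ≤ n := fun n => Nat.findGreatest_le n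
      have hτP : ∀ n, n₁ ≤ n → Ppred (τ n) := fun n hn => Nat.findGreatest_spec hn hPn₁
      have hτtop : Tendsto τ atTop atTop := by
        rw [tendsto_atTop_atTop]
        intro m
        obtain ⟨k, hk1, hk2⟩ := hcase (max m 1)
        have hPk : Ppred k := ⟨le_trans (le_max_right m 1) hk1, hk2⟩
        exact ⟨k, fun n hn =>
          le_trans (le_trans (le_max_left m 1) hk1) (Nat.le_findGreatest hn hPk)⟩
      have hchain : ∀ n, n₁ ≤ n → ‖x n - p‖ ^ 2 ≤ ‖x (τ n + 1) - p‖ ^ 2 := by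
        intro n hn
        have hstep : ∀ m, τ n ≤ m → m ≤ n → ‖x m - p‖ ^ 2 ≤ ‖x (τ n + 1) - p‖ ^ 2 := by
          intro m hm
          induction m, hm using Nat.le_induction with
          | base => intro _; exact le_of_lt (hτP n hn).2
          | succ m hm ih =>
            intro hm1
            rcases Nat.lt_or_ge (τ n) m with hlt | hge
            · have hnP : ¬ Ppred m := Nat.findGreatest_is_greatest hlt (by omega)
              have h1m : 1 ≤ m := by have := (hτP n hn).1; omega
              have h1 : ¬ (‖x m - p‖ ^ 2 < ‖x (m + 1) - p‖ ^ 2) := fun hcon => hnP ⟨h1m, hcon⟩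
              exact le_trans (not_lt.1 h1) (ih (by omega))
            · have he : τ n = m := le_antisymm hm hge
              rw [he]
        exact hstep n (hτle n) le_rfl
      have hατ : Tendsto (fun n => α (τ n)) atTop (nhds 0) := hα0.comp hτtop
      have hEτ : Tendsto (fun n => δ * (1 - δ) * (β (τ n) * ‖x (τ n) - T (x (τ n))‖ ^ 2
          + (1 - β (τ n)) * ‖x (τ n) - S (x (τ n))‖ ^ 2)) atTop (nhds 0) := by
        have hupper : Tendsto (fun n => 2 * (α (τ n) * ‖u - p‖ ^ 2)) atTop (nhds 0) := by
          simpa using (hατ.mul_const (‖u - p‖ ^ 2)).const_mul 2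
        refine tendsto_of_tendsto_of_tendsto_of_le_of_le' tendsto_const_nhds hupper
          (Filter.Eventually.of_forall fun n => hEnonneg (τ n)) ?_
        filter_upwards [hτtop.eventually hαhalf, eventually_ge_atTop n₁] with n hhalf hn
        have h1 := hKB (τ n) (hτP n hn).1
        have h2 := hEnonneg (τ n)
        have h3 : ‖x (τ n) - p‖ ^ 2 - ‖x (τ n + 1) - p‖ ^ 2 ≤ 0 := by
          have := (hτP n hn).2; linarith
        have h4 := (hα (τ n)).1
        nlinarith
      obtain ⟨hTregτ, hSregτ⟩ := reg τ hτtop hEτ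
      have hτ'1 : ∀ n : ℕ, 1 ≤ τ (n + n₁) := fun n => (hτP (n + n₁) (Nat.le_add_left _ _)).1
      have hkeyB := key (fun n => x (τ (n + n₁))) (fun n => hxC _ (hτ'1 n))
        (fun n => hMx _ (hτ'1 n))
        (hTregτ.comp (tendsto_add_atTop_nat n₁)) (hSregτ.comp (tendsto_add_atTop_nat n₁))
      have hgτ : ∀ ε' > (0:ℝ), ∀ᶠ n in atTop, ⟪u - p, x (τ n) - p⟫ < ε' := by
        intro ε' hε'
        obtain ⟨K, hK⟩ := (eventually_atTop).1 (hkeyB ε' hε')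
        rw [eventually_atTop]
        refine ⟨K + n₁, fun n hn => ?_⟩
        have h1 := hK (n - n₁) (by omega)
        have h2 : n - n₁ + n₁ = n := by omega
        rw [h2] at h1
        exact h1
      have hstepnorm : ∀ m, 1 ≤ m → ‖x (m + 1) - x m‖
          ≤ α m * (‖u - p‖ + M) + δ * (‖x m - T (x m)‖ + ‖x m - S (x m)‖) := by
        intro m hm
        have e1 : x (m + 1) - x m = α m • (u - x m) + (1 - α m) • (y m - x m) := by
          rw [hrec' m hm]; module
        have e2 : y m - x m = β m • (δ • (T (x m) - x m))
            + (1 - β m) • (δ • (S (x m) - x m)) := by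
          simp only [hydef]; rw [hAT, hAS]; module
        have h1 : ‖y m - x m‖ ≤ δ * (‖x m - T (x m)‖ + ‖x m - S (x m)‖) := by
          rw [e2]
          refine (norm_add_le _ _).trans ?_
          have k1 : ‖β m • (δ • (T (x m) - x m))‖ = β m * (δ * ‖T (x m) - x m‖) := by
            rw [norm_smul, norm_smul, Real.norm_eq_abs, Real.norm_eq_abs,
              abs_of_nonneg (hβ m).1, abs_of_nonneg hδ0.le]
          have k2 : ‖(1 - β m) • (δ • (S (x m) - x m))‖
              = (1 - β m) * (δ * ‖S (x m) - x m‖) := by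
            rw [norm_smul, norm_smul, Real.norm_eq_abs, Real.norm_eq_abs,
              abs_of_nonneg (by linarith [(hβ m).2] : (0:ℝ) ≤ 1 - β m), abs_of_nonneg hδ0.le]
          rw [k1, k2]
          have r1 : ‖T (x m) - x m‖ = ‖x m - T (x m)‖ := norm_sub_rev _ _
          have r2 : ‖S (x m) - x m‖ = ‖x m - S (x m)‖ := norm_sub_rev _ _
          rw [r1, r2]
          have hb0 := (hβ m).1
          have hb1 := (hβ m).2
          have n1 := norm_nonneg (x m - T (x m))
          have n2 := norm_nonneg (x m - S (x m))
          have t1 : β m * (δ * ‖x m - T (x m)‖) ≤ δ * ‖x m - T (x m)‖ :=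
            mul_le_of_le_one_left (mul_nonneg hδ0.le n1) hb1
          have t2 : (1 - β m) * (δ * ‖x m - S (x m)‖) ≤ δ * ‖x m - S (x m)‖ :=
            mul_le_of_le_one_left (mul_nonneg hδ0.le n2) (by linarith)
          linarith
        have h2 : ‖u - x m‖ ≤ ‖u - p‖ + M := by
          have h2a : ‖p - x m‖ = ‖x m - p‖ := norm_sub_rev _ _
          calc ‖u - x m‖ = ‖(u - p) + (p - x m)‖ := by rw [sub_add_sub_cancel]
            _ ≤ ‖u - p‖ + ‖p - x m‖ := norm_add_le _ _
            _ ≤ ‖u - p‖ + M := by rw [h2a]; exact add_le_add_right (hMx m hm) _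
        calc ‖x (m + 1) - x m‖ ≤ ‖α m • (u - x m)‖ + ‖(1 - α m) • (y m - x m)‖ := by
              rw [e1]; exact norm_add_le _ _
          _ = α m * ‖u - x m‖ + (1 - α m) * ‖y m - x m‖ := by
              rw [norm_smul, norm_smul, Real.norm_eq_abs, Real.norm_eq_abs,
                abs_of_nonneg (hα m).1.le,
                abs_of_nonneg (by linarith [(hα m).2] : (0:ℝ) ≤ 1 - α m)]
          _ ≤ α m * (‖u - p‖ + M) + δ * (‖x m - T (x m)‖ + ‖x m - S (x m)‖) := by
              have h3 := (hα m).1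
              have h4 := (hα m).2
              have h5 : (1 - α m) * ‖y m - x m‖ ≤ ‖y m - x m‖ := by
                nlinarith [norm_nonneg (y m - x m)]
              have h6 := mul_le_mul_of_nonneg_left h2 h3.le
              linarith
      have hdiffτ : Tendsto (fun n => ‖x (τ n + 1) - x (τ n)‖) atTop (nhds 0) := by
        have hupper : Tendsto (fun n => α (τ n) * (‖u - p‖ + M)
            + δ * (‖x (τ n) - T (x (τ n))‖ + ‖x (τ n) - S (x (τ n))‖)) atTop (nhds 0) := by
          have := (hατ.mul_const (‖u - p‖ + M)).add ((hTregτ.add hSregτ).const_mul δ)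
          simpa using this
        refine tendsto_of_tendsto_of_tendsto_of_le_of_le' tendsto_const_nhds hupper
          (Filter.Eventually.of_forall fun n => norm_nonneg _) ?_
        filter_upwards [eventually_ge_atTop n₁] with n hn
        exact hstepnorm (τ n) (hτP n hn).1
      have hinnerdiff : Tendsto (fun n => ⟪u - p, x (τ n + 1) - x (τ n)⟫) atTop (nhds 0) := by
        have hupper : Tendsto (fun n => ‖u - p‖ * ‖x (τ n + 1) - x (τ n)‖) atTop (nhds 0) := by
          simpa using hdiffτ.const_mul ‖u - p‖
        refine squeeze_zero_norm (fun n => ?_) hupper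
        rw [Real.norm_eq_abs]
        exact abs_real_inner_le_norm _ _
      rw [Metric.tendsto_atTop]
      intro ε hεp
      have hεp4 : 0 < ε / 8 := by linarith
      have hia : Tendsto (fun n => |⟪u - p, x (τ n + 1) - x (τ n)⟫|) atTop (nhds 0) := by
        simpa using hinnerdiff.abs
      have hev2 : ∀ᶠ n in atTop, |⟪u - p, x (τ n + 1) - x (τ n)⟫| < ε / 8 :=
        hia.eventually (gt_mem_nhds hεp4)
      have hev := (hgτ (ε / 8) hεp4).and (hev2.and (eventually_ge_atTop n₁))
      obtain ⟨N, hN⟩ := eventually_atTop.1 hev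
      refine ⟨N, fun n hn => ?_⟩
      obtain ⟨h1, h2, h3⟩ := hN n hn
      have h4 : ‖x (τ n + 1) - p‖ ^ 2 ≤ 2 * ⟪u - p, x (τ n + 1) - p⟫ := by
        have hKAτ := hKA (τ n) (hτP n h3).1
        have hlt := (hτP n h3).2
        have hα1 := (hα (τ n)).1
        have hα2 := (hα (τ n)).2
        nlinarith [mul_le_mul_of_nonneg_left hlt.le
          (by linarith : (0:ℝ) ≤ 1 - α (τ n))]
      have h5 : ⟪u - p, x (τ n + 1) - p⟫
          = ⟪u - p, x (τ n) - p⟫ + ⟪u - p, x (τ n + 1) - x (τ n)⟫ := by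
        rw [← inner_add_right]
        congr 1
        abel
      have h6 := hchain n h3
      have habs := (abs_lt.1 h2).2
      rw [Real.dist_eq, sub_zero, abs_of_nonneg (sq_nonneg _)]
      linarith
  have hxp : Tendsto x atTop (nhds p) := by
    rw [tendsto_iff_dist_tendsto_zero]
    have h3 := ha0.sqrt
    rw [Real.sqrt_zero] at h3
    refine h3.congr fun n => ?_
    rw [Real.sqrt_sq (norm_nonneg _), dist_eq_norm]
  exact ⟨p, hpC, hpT, hpS, fun z hz h1 h2 => hpmin z ⟨hz, h1, h2⟩, hxp⟩
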